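/- Let k₁ ≠ 0, k₂, k₃ ≠ 0, a₀, c₀ ≠ 0, β₀ be real constants with k₁ + k₃ ≠ 0 and k₁ + 2k₃ ≠ 0, and let τ(t) = 3k₁ t + k₃ > 0 on an interval. Define C(t) = c₀ τ^{−2k₃/(3k₁) − 4/3}, A(t) = (1/(k₁+k₃))·τ^{−2k₃/(3k₁) − 4/3}·(2c₀k₂ + a₀(k₁+k₃)τ^{k₃/(3k₁)+1/3}), and β(t) = β₀ − a₀k₂ τ^{−k₃/(3k₁)}/k₃ − 2c₀k₂² τ^{−2k₃/(3k₁)−1/3}/((k₁+k₃)(k₁+2k₃)). Then k₂·A(t) − β'(t) = 0 for all t in the interval. -/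

import Mathlib

open Real

theorem stmt13 (k₁ k₂ k₃ a₀ c₀ β₀ : ℝ)
    (hk₁ : k₁ ≠ 0) (hk₃ : k₃ ≠ 0) (hc₀ : c₀ ≠ 0)
    (h13 : k₁ + k₃ ≠ 0) (h123 : k₁ + 2 * k₃ ≠ 0)
    (τ C A β : ℝ → ℝ)
    (hτ : ∀ t, τ t = 3 * k₁ * t + k₃)
    (hC : ∀ t, C t = c₀ * τ t ^ (-2 * k₃ / (3 * k₁) - 4/3))
    (hA : ∀ t, A t = (1 / (k₁ + k₃)) * τ t ^ (-2 * k₃ / (3 * k₁) - 4/3) *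
      (2 * c₀ * k₂ + a₀ * (k₁ + k₃) * τ t ^ (k₃ / (3 * k₁) + 1/3)))
    (hβ : ∀ t, β t = β₀ - a₀ * k₂ * τ t ^ (-(k₃ / (3 * k₁))) / k₃
      - 2 * c₀ * k₂^2 * τ t ^ (-2 * k₃ / (3 * k₁) - 1/3) / ((k₁ + k₃) * (k₁ + 2 * k₃))) :
    ∀ t, τ t > 0 → k₂ * A t - deriv β t = 0 := by
  intro t ht
  have hβf : β = fun s => β₀ - a₀ * k₂ * (3 * k₁ * s + k₃) ^ (-(k₃ / (3 * k₁))) / k₃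
      - 2 * c₀ * k₂^2 * (3 * k₁ * s + k₃) ^ (-2 * k₃ / (3 * k₁) - 1/3) /
        ((k₁ + k₃) * (k₁ + 2 * k₃)) := by
    funext s; rw [hβ s, hτ s]
  set p : ℝ := -(k₃ / (3 * k₁)) with hp
  set q : ℝ := -2 * k₃ / (3 * k₁) - 1/3 with hq
  have hT : (0:ℝ) < 3 * k₁ * t + k₃ := by rw [hτ t] at ht; exact ht
  have hTne : (3 * k₁ * t + k₃) ≠ 0 := ne_of_gt hT
  have hlin : HasDerivAt (fun s : ℝ => 3 * k₁ * s + k₃) (3 * k₁) t := by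
    simpa using ((hasDerivAt_id t).const_mul (3 * k₁)).add_const k₃
  have h1 : HasDerivAt (fun s : ℝ => (3 * k₁ * s + k₃) ^ p)
      (p * (3 * k₁ * t + k₃) ^ (p - 1) * (3 * k₁)) t :=
    by have := (Real.hasDerivAt_rpow_const (p := p) (Or.inl hTne)).comp t hlin; exact this
  have h2 : HasDerivAt (fun s : ℝ => (3 * k₁ * s + k₃) ^ q)
      (q * (3 * k₁ * t + k₃) ^ (q - 1) * (3 * k₁)) t :=
    by have := (Real.hasDerivAt_rpow_const (p := q) (Or.inl hTne)).comp t hlin; exact this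
  have hβd : HasDerivAt β
      (a₀ * k₂ * (p * (3 * k₁ * t + k₃) ^ (p - 1) * (3 * k₁)) / k₃ * (-1)
        + 2 * c₀ * k₂^2 * (q * (3 * k₁ * t + k₃) ^ (q - 1) * (3 * k₁)) /
          ((k₁ + k₃) * (k₁ + 2 * k₃)) * (-1)) t := by
    rw [hβf]
    have := (((h1.const_mul (a₀ * k₂)).div_const k₃).const_sub β₀).sub
      (((h2.const_mul (2 * c₀ * k₂^2)).div_const ((k₁ + k₃) * (k₁ + 2 * k₃))))
    refine this.congr_deriv ?_
    ring
  rw [hβd.deriv, hA t, hτ t]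
  set r : ℝ := -2 * k₃ / (3 * k₁) - 4/3 with hr
  set s : ℝ := k₃ / (3 * k₁) + 1/3 with hs
  have e1 : p - 1 = r + s := by
    rw [hp, hr, hs]; field_simp; ring
  have e2 : q - 1 = r := by rw [hq, hr]; ring
  have hk₁' : (3 : ℝ) * k₁ ≠ 0 := by positivity
  obtain ⟨X, hX⟩ : ∃ X, (3 * k₁ * t + k₃) ^ r = X := ⟨_, rfl⟩
  obtain ⟨Y, hY⟩ : ∃ Y, (3 * k₁ * t + k₃) ^ s = Y := ⟨_, rfl⟩
  have hXY : (3 * k₁ * t + k₃) ^ (r + s) = X * Y := by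
    rw [Real.rpow_add hT, hX, hY]
  rw [e1, e2, hXY, hX, hY, hp, hq]
  have h123' : k₁ + k₃ * 2 ≠ 0 := by rwa [mul_comm k₃]
  field_simp
  ring
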